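/- Fix 0 < p < 1 and let F_p(α) = p²α^{−2} + 2p(2−p) + (2−p)²α² − 4(α^{−p} + α^{2−p} − 1). Then the equation F_p′(α) = 0 has exactly one solution in the open interval (0,1), namely α = √(p/(2−p)). -/

import Mathlib

/-- The function `F_p(α) = p²α^{-2} + 2p(2-p) + (2-p)²α² - 4(α^{-p} + α^{2-p} - 1)`. -/
noncomputable def Fp (p a : ℝ) : ℝ :=
  p ^ 2 * a ^ (-2 : ℝ) + 2 * p * (2 - p) + (2 - p) ^ 2 * a ^ 2
    - 4 * (a ^ (-p) + a ^ (2 - p) - 1)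

/-- The derivative `F_p'(α) = -2p²α^{-3} + 2(2-p)²α + 4pα^{-p-1} - 4(2-p)α^{1-p}`. -/
noncomputable def Fp' (p a : ℝ) : ℝ :=
  -2 * p ^ 2 * a ^ (-3 : ℝ) + 2 * (2 - p) ^ 2 * a + 4 * p * a ^ (-p - 1)
    - 4 * (2 - p) * a ^ (1 - p)

theorem Fp_deriv_unique_zero (p : ℝ) (hp0 : 0 < p) (hp1 : p < 1) :
    (∀ a ∈ Set.Ioo (0 : ℝ) 1, HasDerivAt (Fp p) (Fp' p a) a)
    ∧ ∀ a ∈ Set.Ioo (0 : ℝ) 1, (Fp' p a = 0 ↔ a = Real.sqrt (p / (2 - p))) := by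
  constructor
  · rintro a ⟨ha0, ha1⟩
    have ha : a ≠ 0 := ne_of_gt ha0
    have h1 : HasDerivAt (fun x : ℝ => x ^ (-2 : ℝ)) ((-2) * a ^ ((-2 : ℝ) - 1)) a :=
      Real.hasDerivAt_rpow_const (Or.inl ha)
    have h2 : HasDerivAt (fun x : ℝ => x ^ 2) (2 * a) a := by
      simpa using hasDerivAt_pow 2 a
    have h3 : HasDerivAt (fun x : ℝ => x ^ (-p)) ((-p) * a ^ (-p - 1)) a :=
      Real.hasDerivAt_rpow_const (Or.inl ha)
    have h4 : HasDerivAt (fun x : ℝ => x ^ (2 - p)) ((2 - p) * a ^ (2 - p - 1)) a :=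
      Real.hasDerivAt_rpow_const (Or.inl ha)
    have hsum := (((h1.const_mul (p ^ 2)).add_const (2 * p * (2 - p))).add
      (h2.const_mul ((2 - p) ^ 2))).sub (((h3.add h4).sub_const 1).const_mul 4)
    refine hsum.congr_deriv ?_
    unfold Fp'
    have e1 : (-2 : ℝ) - 1 = -3 := by norm_num
    have e2 : (2 : ℝ) - p - 1 = 1 - p := by ring
    rw [e1, e2]; ring
  · rintro a ⟨ha0, ha1⟩
    have ha : a ≠ 0 := ne_of_gt ha0
    have h2p : (0 : ℝ) < 2 - p := by linarith
    set t := a ^ (-p) with ht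
    have ht0 : 0 < t := Real.rpow_pos_of_pos ha0 _
    have hm1 : a ^ (-p - 1) = t * a⁻¹ := by
      rw [ht, Real.rpow_sub ha0, Real.rpow_one, div_eq_mul_inv]
    have h1p : a ^ (1 - p) = a * t := by
      rw [ht, sub_eq_add_neg, Real.rpow_add ha0, Real.rpow_one]
    have h3 : a ^ (-3 : ℝ) = (a ^ 3)⁻¹ := by
      rw [show (-3 : ℝ) = -((3 : ℕ) : ℝ) by norm_num, Real.rpow_neg ha0.le,
        Real.rpow_natCast]
    have key : Fp' p a = 2 * (a ^ 3)⁻¹ *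
        (((2 - p) * a ^ 2 - p) * ((2 - p) * a ^ 2 + p - 2 * (a ^ 2 * t))) := by
      unfold Fp'
      rw [h3, hm1, h1p]
      field_simp
      ring
    -- positivity of the second factor via strict Bernoulli inequality
    have hx : a ^ ((2 : ℝ) - p) = a ^ 2 * t := by
      rw [ht, sub_eq_add_neg, Real.rpow_add ha0, show ((2:ℝ)) = ((2:ℕ):ℝ) by norm_num,
        Real.rpow_natCast]
    set x := a ^ ((2 : ℝ) - p) with hxdef
    have hx0 : 0 < x := Real.rpow_pos_of_pos ha0 _
    have hx1 : x < 1 := Real.rpow_lt_one ha0.le ha1 (by linarith)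
    have hq : 1 < 2 / (2 - p) := (one_lt_div h2p).mpr (by linarith)
    have hB := one_add_mul_self_lt_rpow_one_add (s := x - 1) (by linarith) (by linarith)
      (p := 2 / (2 - p)) hq
    have hxq : (1 + (x - 1)) ^ (2 / (2 - p)) = a ^ 2 := by
      rw [show 1 + (x - 1) = x by ring, hxdef, ← Real.rpow_natCast a 2,
        ← Real.rpow_mul ha0.le]
      norm_num
      rw [show (2 - p) * (2 / (2 - p)) = ((2:ℕ):ℝ) by field_simp; norm_num, Real.rpow_natCast]
    rw [hxq] at hB
    have hexp : (2 - p) * (1 + 2 / (2 - p) * (x - 1)) = 2 * x - p := by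
      field_simp
      ring
    have hmul := mul_lt_mul_of_pos_left hB h2p
    rw [hexp] at hmul
    have hP : 0 < (2 - p) * a ^ 2 + p - 2 * (a ^ 2 * t) := by
      rw [← hx]
      linarith
    have hpos : 0 < 2 * (a ^ 3)⁻¹ := by positivity
    rw [key]
    constructor
    · intro h
      have hA : (2 - p) * a ^ 2 - p = 0 := by
        rcases mul_eq_zero.mp h with h' | h'
        · exact absurd h' (ne_of_gt hpos)
        · rcases mul_eq_zero.mp h' with h'' | h''
          · exact h''
          · exact absurd h'' (ne_of_gt hP)
      have hsq : a ^ 2 = p / (2 - p) := by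
        field_simp
        linarith
      rw [← hsq, Real.sqrt_sq ha0.le]
    · intro h
      have hsq : a ^ 2 = p / (2 - p) := by
        rw [h, Real.sq_sqrt (by positivity)]
      have : (2 - p) * a ^ 2 - p = 0 := by
        rw [hsq]
        field_simp
        ring
      rw [this]
      ring
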